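/- Let ε > 0, 0 < g₁ ≤ g₂, δ̄ ≥ 0, θ ∈ (0,1), β ∈ (0,1), and set φ = δ̄ + θ. Let x : ℝ → ℝ be differentiable on [t₀, ∞) with |x(t)| < ε for all t ≥ t₀, and suppose there exist functions g, δ : ℝ → ℝ with g₁ ≤ g(t) ≤ g₂ and |δ(t)| ≤ δ̄ for all t ≥ t₀, such that x'(t) = g(t)·( δ(t) − x(t)/(ε − |x(t)|) ) for all t ≥ t₀, and |x(t₀)| ≤ β·ε. Then there exists T ≥ 0 (one may take T = ε/(g₁·θ)) such that |x(t)| ≤ (φ/(φ+1))·ε for all t ≥ t₀ + T. -/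

import Mathlib

/-- finite-time convergence part of Theorem 1, continuous time:
the barrier-function closed loop `x' = g(t)(δ(t) - x/(ε - |x|))` starting from
`|x(t₀)| ≤ βε` reaches the final set `{x : |x| ≤ (φ/(φ+1))ε}`, `φ = δ̄ + θ`, after
at most a finite time `T` (one may take `T = ε/(g₁θ)`) and remains there. -/
theorem stmt_17 (ε g₁ g₂ δb θ β φ t₀ : ℝ)
    (hε : 0 < ε) (hg₁ : 0 < g₁) (hg₁₂ : g₁ ≤ g₂) (hδb : 0 ≤ δb)
    (hθ0 : 0 < θ) (hθ1 : θ < 1) (hβ0 : 0 < β) (hβ1 : β < 1)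
    (hφ : φ = δb + θ)
    (x g δ : ℝ → ℝ)
    (hx_lt : ∀ t : ℝ, t₀ ≤ t → |x t| < ε)
    (hg_bd : ∀ t : ℝ, t₀ ≤ t → g₁ ≤ g t ∧ g t ≤ g₂)
    (hδ_bd : ∀ t : ℝ, t₀ ≤ t → |δ t| ≤ δb)
    (hode : ∀ t : ℝ, t₀ ≤ t →
      HasDerivAt x (g t * (δ t - x t / (ε - |x t|))) t)
    (hx₀ : |x t₀| ≤ β * ε) :
    ∃ T : ℝ, 0 ≤ T ∧ T ≤ ε / (g₁ * θ) ∧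
      ∀ t : ℝ, t₀ + T ≤ t → |x t| ≤ (φ / (φ + 1)) * ε := by
  have hφ0 : 0 < φ := by rw [hφ]; linarith
  set c : ℝ := (φ / (φ + 1)) * ε with hc
  have hφ1 : 0 < φ + 1 := by linarith
  have hc0 : 0 < c := by
    apply mul_pos (div_pos hφ0 hφ1) hε
  have hgθ : 0 < g₁ * θ := mul_pos hg₁ hθ0
  -- key pointwise derivative bound
  have key : ∀ (gu du xu : ℝ), g₁ ≤ gu → |du| ≤ δb → |xu| < ε → c ≤ xu →
      gu * (du - xu / (ε - |xu|)) ≤ -(g₁ * θ) := by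
    intro gu du xu hg hd hxe hxc
    have hxu0 : 0 < xu := lt_of_lt_of_le hc0 hxc
    rw [abs_of_pos hxu0] at hxe ⊢
    have hεx : 0 < ε - xu := by linarith
    have h1 : φ * ε ≤ xu * (φ + 1) := by
      rw [hc, div_mul_eq_mul_div] at hxc
      exact (div_le_iff₀ hφ1).mp hxc
    have h2 : φ ≤ xu / (ε - xu) := by
      rw [le_div_iff₀ hεx]; nlinarith
    have hq : du - xu / (ε - xu) ≤ -θ := by
      have := (abs_le.mp hd).2
      have : du ≤ δb := this
      linarith [hφ ▸ h2]
    have hq0 : du - xu / (ε - xu) ≤ 0 := by linarith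
    calc gu * (du - xu / (ε - xu)) ≤ g₁ * (du - xu / (ε - xu)) :=
          mul_le_mul_of_nonpos_right hg hq0
      _ ≤ g₁ * (-θ) := mul_le_mul_of_nonneg_left hq hg₁.le
      _ = -(g₁ * θ) := by ring
  -- decrease lemma, for a general solution y with disturbance d
  have decrease : ∀ (y d : ℝ → ℝ),
      (∀ t, t₀ ≤ t → |y t| < ε) →
      (∀ t, t₀ ≤ t → |d t| ≤ δb) →
      (∀ t, t₀ ≤ t → HasDerivAt y (g t * (d t - y t / (ε - |y t|))) t) →
      ∀ a b : ℝ, t₀ ≤ a → a ≤ b → (∀ u ∈ Set.Icc a b, c ≤ y u) →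
      y b ≤ y a - g₁ * θ * (b - a) := by
    intro y d hy_lt hd_bd hyode a b ha hab hge
    set f : ℝ → ℝ := fun u => y u + g₁ * θ * u with hf
    have hder : ∀ u ∈ Set.Ioo a b,
        HasDerivAt f (g u * (d u - y u / (ε - |y u|)) + g₁ * θ) u := by
      intro u hu
      have hu0 : t₀ ≤ u := le_trans ha hu.1.le
      have h1 := hyode u hu0
      have h2 : HasDerivAt (fun u : ℝ => g₁ * θ * u) (g₁ * θ) u := by
        simpa using (hasDerivAt_id u).const_mul (g₁ * θ)
      exact h1.add h2
    have hcont : ContinuousOn f (Set.Icc a b) := by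
      intro u hu
      have hu0 : t₀ ≤ u := le_trans ha hu.1
      exact ((hyode u hu0).continuousAt.add
        ((continuous_const.mul continuous_id).continuousAt)).continuousWithinAt
    have hanti : AntitoneOn f (Set.Icc a b) := by
      apply antitoneOn_of_deriv_nonpos (convex_Icc a b) hcont
      · rw [interior_Icc]
        intro u hu
        exact ((hder u hu).differentiableAt).differentiableWithinAt
      · rw [interior_Icc]
        intro u hu
        rw [(hder u hu).deriv]
        have hu0 : t₀ ≤ u := le_trans ha hu.1.le
        have := key (g u) (d u) (y u) (hg_bd u hu0).1 (hd_bd u hu0) (hy_lt u hu0)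
          (hge u (Set.mem_Icc.mpr ⟨hu.1.le, hu.2.le⟩))
        linarith
    have := hanti (Set.left_mem_Icc.mpr hab) (Set.right_mem_Icc.mpr hab) hab
    simp only [hf] at this
    linarith
  -- upper invariance: once y ≤ c it stays ≤ c
  have upper : ∀ (y d : ℝ → ℝ),
      (∀ t, t₀ ≤ t → |y t| < ε) →
      (∀ t, t₀ ≤ t → |d t| ≤ δb) →
      (∀ t, t₀ ≤ t → HasDerivAt y (g t * (d t - y t / (ε - |y t|))) t) →
      ∀ t₁ t : ℝ, t₀ ≤ t₁ → t₁ ≤ t → y t₁ ≤ c → y t ≤ c := by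
    intro y d hy_lt hd_bd hyode t₁ t ht₁ ht₁t hy₁
    by_contra hyt
    push_neg at hyt
    set A : Set ℝ := Set.Icc t₁ t ∩ y ⁻¹' Set.Iic c with hA
    have hycont : ContinuousOn y (Set.Icc t₁ t) := by
      intro u hu
      exact ((hyode u (le_trans ht₁ hu.1)).continuousAt).continuousWithinAt
    have hAcl : IsClosed A := hycont.preimage_isClosed_of_isClosed isClosed_Icc isClosed_Iic
    have hAne : A.Nonempty := ⟨t₁, ⟨Set.left_mem_Icc.mpr ht₁t, hy₁⟩⟩
    have hAbdd : BddAbove A := ⟨t, fun u hu => hu.1.2⟩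
    set s : ℝ := sSup A with hs
    have hsA : s ∈ A := hAcl.csSup_mem hAne hAbdd
    have hst : s ≤ t := hsA.1.2
    have hts : t₀ ≤ s := le_trans ht₁ hsA.1.1
    have hslt : s < t := by
      rcases lt_or_eq_of_le hst with h | h
      · exact h
      · exfalso; rw [h] at hsA; exact absurd hsA.2 (not_le.mpr hyt)
    have hIoc : ∀ u ∈ Set.Ioc s t, c < y u := by
      intro u hu
      by_contra hcu
      push_neg at hcu
      have huA : u ∈ A := ⟨⟨le_trans hsA.1.1 hu.1.le, hu.2⟩, hcu⟩
      exact absurd (le_csSup hAbdd huA) (not_le.mpr hu.1)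
    have hys : c ≤ y s := by
      have htend : Filter.Tendsto y (nhdsWithin s (Set.Ioi s)) (nhds (y s)) :=
        ((hyode s hts).continuousAt).continuousWithinAt
      refine ge_of_tendsto htend ?_
      filter_upwards [Ioc_mem_nhdsGT hslt] with u hu
      exact (hIoc u hu).le
    have hge : ∀ u ∈ Set.Icc s t, c ≤ y u := by
      intro u hu
      rcases eq_or_lt_of_le hu.1 with h | h
      · rwa [← h]
      · exact (hIoc u ⟨h, hu.2⟩).le
    have := decrease y d hy_lt hd_bd hyode s t hts hst hge
    have hsAc : y s ≤ c := hsA.2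
    nlinarith
  -- hypotheses for -x with disturbance -δ
  have hy_lt : ∀ t, t₀ ≤ t → |(-x ·) t| < ε := by
    intro t ht; simpa [abs_neg] using hx_lt t ht
  have hd_bd : ∀ t, t₀ ≤ t → |(-δ ·) t| ≤ δb := by
    intro t ht; simpa [abs_neg] using hδ_bd t ht
  have hyode : ∀ t, t₀ ≤ t →
      HasDerivAt (-x ·) (g t * ((-δ ·) t - (-x ·) t / (ε - |(-x ·) t|))) t := by
    intro t ht
    have h : HasDerivAt (-x ·) _ t := (hode t ht).neg
    convert h using 1
    simp only [abs_neg]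
    ring
  refine ⟨ε / (g₁ * θ), le_of_lt (div_pos hε hgθ), le_refl _, ?_⟩
  set T : ℝ := ε / (g₁ * θ) with hT
  have hT0 : 0 ≤ T := le_of_lt (div_pos hε hgθ)
  have hTmul : g₁ * θ * T = ε := by
    rw [hT]; field_simp
  -- there exists t₁ ∈ [t₀, t₀+T] with |x t₁| ≤ c
  have hreach : ∃ t₁ : ℝ, t₀ ≤ t₁ ∧ t₁ ≤ t₀ + T ∧ |x t₁| ≤ c := by
    by_contra hcon
    push_neg at hcon
    have hgt : ∀ u ∈ Set.Icc t₀ (t₀ + T), c < |x u| := by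
      intro u hu; exact hcon u hu.1 hu.2
    -- the sign of x is constant on the interval
    have hsign : (∀ u ∈ Set.Icc t₀ (t₀ + T), c ≤ x u) ∨
        (∀ u ∈ Set.Icc t₀ (t₀ + T), c ≤ -x u) := by
      have hne : ∀ u ∈ Set.Icc t₀ (t₀ + T), x u ≠ 0 := by
        intro u hu h0
        have := hgt u hu
        rw [h0, abs_zero] at this; linarith
      have hxcont : ContinuousOn x (Set.Icc t₀ (t₀ + T)) := by
        intro u hu
        exact ((hode u hu.1).continuousAt).continuousWithinAt
      rcases le_or_gt (x t₀) 0 with h0 | h0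
      · right
        intro u hu
        rcases lt_or_ge 0 (x u) with hpos | hneg
        · exfalso
          have h0' : (0:ℝ) ∈ Set.Icc (x t₀) (x u) := ⟨h0, hpos.le⟩
          have hsub : Set.Icc t₀ u ⊆ Set.Icc t₀ (t₀ + T) :=
            Set.Icc_subset_Icc le_rfl hu.2
          obtain ⟨w, hw, hw0⟩ := intermediate_value_Icc hu.1 (hxcont.mono hsub) h0'
          exact hne w (hsub hw) hw0
        · have := hgt u hu
          rw [abs_of_nonpos hneg] at this
          exact this.le
      · left
        intro u hu
        rcases lt_or_ge (x u) 0 with hneg | hpos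
        · exfalso
          have h0' : (0:ℝ) ∈ Set.Icc (x u) (x t₀) := ⟨hneg.le, h0.le⟩
          have hsub : Set.Icc t₀ u ⊆ Set.Icc t₀ (t₀ + T) :=
            Set.Icc_subset_Icc le_rfl hu.2
          obtain ⟨w, hw, hw0⟩ := intermediate_value_Icc' hu.1 (hxcont.mono hsub) h0'
          exact hne w (hsub hw) hw0
        · have := hgt u hu
          rw [abs_of_nonneg hpos] at this
          exact this.le
    have hend : t₀ ≤ t₀ + T := by linarith
    rcases hsign with hpos | hneg
    · have hdec := decrease x δ hx_lt hδ_bd hode t₀ (t₀ + T) le_rfl hend hpos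
      have hxε : x t₀ < ε := lt_of_abs_lt (hx_lt t₀ le_rfl)
      have hcend : c ≤ x (t₀ + T) :=
        hpos (t₀ + T) (Set.right_mem_Icc.mpr hend)
      nlinarith [hTmul]
    · have hdec := decrease (-x ·) (-δ ·) hy_lt hd_bd hyode t₀ (t₀ + T) le_rfl hend hneg
      have hxε : -x t₀ < ε := by
        have := hx_lt t₀ le_rfl
        have := neg_abs_le (x t₀); linarith [abs_lt.mp (hx_lt t₀ le_rfl)]
      have hcend : c ≤ -x (t₀ + T) :=
        hneg (t₀ + T) (Set.right_mem_Icc.mpr hend)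
      nlinarith [hTmul]
  obtain ⟨t₁, ht₁0, ht₁T, ht₁c⟩ := hreach
  intro t ht
  have ht₁t : t₁ ≤ t := le_trans ht₁T ht
  have h1 : x t ≤ c := upper x δ hx_lt hδ_bd hode t₁ t ht₁0 ht₁t (le_trans (le_abs_self _) ht₁c)
  have h2 : -x t ≤ c := by
    have := upper (-x ·) (-δ ·) hy_lt hd_bd hyode t₁ t ht₁0 ht₁t
      (le_trans (neg_le_abs _) (by simpa [abs_neg] using ht₁c))
    simpa using this
  rw [abs_le]; constructor <;> linarith
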